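/- Let ω = e^{2πi/3}, Λ = ℤω ⊕ ℤ, ⟨z,w⟩ := Re(z·conj(w)), K = 4π/3 and z_S = i/√3. Suppose U : ℂ → ℂ satisfies U(z+γ) = e^{i⟨γ,K⟩}U(z) for all γ ∈ Λ and all z ∈ ℂ, and U(ωz) = ωU(z) for all z ∈ ℂ. Then U(z_S + ωζ) = ω̄·U(z_S + ζ) for all ζ ∈ ℂ, and in particular U vanishes at the stacking point of high symmetry: U(z_S) = 0. -/

import Mathlib

open Complex

noncomputable section

/-- `ω = e^{2πi/3}`. -/
def ω : ℂ := Complex.exp (2 * (Real.pi : ℂ) * Complex.I / 3)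

/-- The hexagonal lattice `Λ = ℤω ⊕ ℤ`. -/
def inΛ (γ : ℂ) : Prop := ∃ m n : ℤ, γ = (m : ℂ) * ω + (n : ℂ)

/-- The pairing `⟨z,w⟩ = Re (z ⬝ conj w)`. -/
def pairing (z w : ℂ) : ℝ := (z * (starRingEnd ℂ) w).re

/-- The Dirac momentum `K = 4π/3`. -/
def Kpt : ℂ := 4 * (Real.pi : ℂ) / 3

/-- The stacking point `z_S = i/√3`. -/
def zS : ℂ := Complex.I / (Real.sqrt 3 : ℂ)

lemma sqrt3_sq : (Real.sqrt 3 : ℂ) * (Real.sqrt 3 : ℂ) = 3 := by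
  norm_cast
  exact Real.mul_self_sqrt (by norm_num)

lemma omega_eq : ω = (((-1/2 : ℝ)) : ℂ) + ((Real.sqrt 3 / 2 : ℝ) : ℂ) * Complex.I := by
  have h : (2 * (Real.pi : ℂ) * Complex.I / 3) = ((2 * Real.pi / 3 : ℝ) : ℂ) * Complex.I := by
    push_cast; ring
  rw [ω, h, Complex.exp_mul_I, ← Complex.ofReal_cos, ← Complex.ofReal_sin]
  have hc : Real.cos (2 * Real.pi / 3) = -1/2 := by
    have h2 : (2 * Real.pi / 3) = Real.pi - Real.pi / 3 := by ring
    rw [h2, Real.cos_pi_sub, Real.cos_pi_div_three]; norm_num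
  have hs : Real.sin (2 * Real.pi / 3) = Real.sqrt 3 / 2 := by
    have h2 : (2 * Real.pi / 3) = Real.pi - Real.pi / 3 := by ring
    rw [h2, Real.sin_pi_sub, Real.sin_pi_div_three]
  rw [hc, hs]

lemma omega_re : ω.re = -1/2 := by rw [omega_eq]; simp

lemma omega_im : ω.im = Real.sqrt 3 / 2 := by rw [omega_eq]; simp

lemma conj_omega : (starRingEnd ℂ) ω = ω * ω := by
  have h3 := sqrt3_sq
  rw [omega_eq]
  simp only [map_add, map_mul, Complex.conj_I, Complex.conj_ofReal]
  push_cast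
  linear_combination (-(Complex.I^2)/4) * h3 + (-3/4) * Complex.I_sq

theorem stmt0 (U : ℂ → ℂ)
    (hU1 : ∀ γ : ℂ, inΛ γ → ∀ z : ℂ,
      U (z + γ) = Complex.exp (Complex.I * (pairing γ Kpt : ℂ)) * U z)
    (hU2 : ∀ z : ℂ, U (ω * z) = ω * U z) :
    (∀ ζ : ℂ, U (zS + ω * ζ) = (starRingEnd ℂ) ω * U (zS + ζ)) ∧ U zS = 0 := by
  have hγ : inΛ (1 + ω) := ⟨1, 1, by push_cast; ring⟩
  have h3 := sqrt3_sq
  have hne3 : (Real.sqrt 3 : ℂ) ≠ 0 := by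
    intro h; rw [h] at h3; norm_num at h3
  have hzS : ω * zS = zS - 1 - ω := by
    rw [omega_eq, zS]
    field_simp
    push_cast
    linear_combination ((Real.sqrt 3:ℂ)/2) * Complex.I_sq + (Complex.I/2) * sqrt3_sq
  have hK : Kpt = ((4 * Real.pi / 3 : ℝ) : ℂ) := by rw [Kpt]; push_cast; ring
  have hpair : pairing (1 + ω) Kpt = 2 * Real.pi / 3 := by
    rw [pairing, hK, Complex.conj_ofReal]
    simp [Complex.mul_re, Complex.add_re, Complex.add_im, omega_re]
    ring
  have hexp : Complex.exp (Complex.I * ((2 * Real.pi / 3 : ℝ) : ℂ)) = ω := by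
    rw [ω]; congr 1; push_cast; ring
  have key : ∀ ζ : ℂ, U (zS + ω * ζ) = (starRingEnd ℂ) ω * U (zS + ζ) := by
    intro ζ
    have h1 := hU1 (1 + ω) hγ (ω * (zS + ζ))
    have harg : ω * (zS + ζ) + (1 + ω) = zS + ω * ζ := by
      rw [mul_add, hzS]; ring
    rw [harg] at h1
    rw [h1, hU2, hpair, hexp, conj_omega]
    ring
  refine ⟨key, ?_⟩
  have h0 := key 0
  simp only [mul_zero, add_zero] at h0
  have hfac : (1 - (starRingEnd ℂ) ω) * U zS = 0 := by
    rw [sub_mul, one_mul, ← h0]; ring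
  have hne : (1 - (starRingEnd ℂ) ω) ≠ 0 := by
    intro h
    have him := congrArg Complex.im h
    simp [Complex.sub_im, Complex.conj_im, omega_im] at him
  rcases mul_eq_zero.mp hfac with h | h
  · exact absurd h hne
  · exact h

end
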